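/- Singular value thresholding solves the nuclear-norm proximal problem: if T = UΣVᵀ is a singular value decomposition of an m×n real matrix T and τ > 0, then D_τ(T) := U·max(Σ - τI, 0)·Vᵀ is the unique minimizer of L ↦ ‖L‖_* + (1/(2τ))‖L - T‖_F². -/

import Mathlib

open scoped BigOperators
open Matrix

noncomputable def nuclearNorm {m n : ℕ} (A : Matrix (Fin m) (Fin n) ℝ) : ℝ :=
  ∑ i, Real.sqrt ((show (Aᵀ * A).IsHermitian by
    simpa using Matrix.isHermitian_conjTranspose_mul_self A).eigenvalues i)

def frobSq {m n : ℕ} (A : Matrix (Fin m) (Fin n) ℝ) : ℝ := ∑ i, ∑ j, (A i j) ^ 2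

namespace SVTaux

/-- entrywise inner product -/
def ip {m n : ℕ} (A B : Matrix (Fin m) (Fin n) ℝ) : ℝ := ∑ i, ∑ j, A i j * B i j

lemma ip_eq_trace {m n : ℕ} (A B : Matrix (Fin m) (Fin n) ℝ) :
    ip A B = Matrix.trace (Aᵀ * B) := by
  unfold ip Matrix.trace
  simp only [Matrix.diag, Matrix.mul_apply, Matrix.transpose_apply]
  exact Finset.sum_comm

lemma sum_sq_mulVec {a b : ℕ} (M : Matrix (Fin a) (Fin b) ℝ) (x : Fin b → ℝ) :
    ∑ i, ((M *ᵥ x) i)^2 = x ⬝ᵥ ((Mᵀ * M) *ᵥ x) := by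
  have h1 : ∑ i, ((M *ᵥ x) i)^2 = (M *ᵥ x) ⬝ᵥ (M *ᵥ x) := by
    simp [dotProduct, sq]
  rw [h1, Matrix.dotProduct_mulVec, ← Matrix.mulVec_transpose, Matrix.mulVec_mulVec]
  exact dotProduct_comm _ _

lemma trace_transpose_mul {m n : ℕ} (A B : Matrix (Fin m) (Fin n) ℝ) :
    Matrix.trace (Aᵀ * B) = ∑ j, ∑ i, A i j * B i j := by
  unfold Matrix.trace
  simp only [Matrix.diag, Matrix.mul_apply, Matrix.transpose_apply]

lemma spectral_pack {k : ℕ} {H : Matrix (Fin k) (Fin k) ℝ} (hH : H.IsHermitian) :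
    ((hH.eigenvectorUnitary : Matrix (Fin k) (Fin k) ℝ)ᵀ *
      (hH.eigenvectorUnitary : Matrix (Fin k) (Fin k) ℝ) = 1) ∧
    ((hH.eigenvectorUnitary : Matrix (Fin k) (Fin k) ℝ) *
      (hH.eigenvectorUnitary : Matrix (Fin k) (Fin k) ℝ)ᵀ = 1) ∧
    ((hH.eigenvectorUnitary : Matrix (Fin k) (Fin k) ℝ)ᵀ * H *
      (hH.eigenvectorUnitary : Matrix (Fin k) (Fin k) ℝ) = Matrix.diagonal hH.eigenvalues) := by
  have hs : star (hH.eigenvectorUnitary : Matrix (Fin k) (Fin k) ℝ) =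
      (hH.eigenvectorUnitary : Matrix (Fin k) (Fin k) ℝ)ᵀ := by
    rw [Matrix.star_eq_conjTranspose, Matrix.conjTranspose_eq_transpose_of_trivial]
  have h1 : star (hH.eigenvectorUnitary : Matrix (Fin k) (Fin k) ℝ) *
      (hH.eigenvectorUnitary : Matrix (Fin k) (Fin k) ℝ) = 1 := Unitary.coe_star_mul_self _
  have h3 := hH.conjStarAlgAut_star_eigenvectorUnitary
  rw [Unitary.conjStarAlgAut_star_apply] at h3
  rw [hs] at h1 h3
  refine ⟨h1, mul_eq_one_comm.mp h1, ?_⟩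
  rw [h3]
  congr 1

lemma ip_le_nuclearNorm {m n : ℕ} (W L : Matrix (Fin m) (Fin n) ℝ)
    (hW : ∀ x : Fin n → ℝ, ∑ i, ((W *ᵥ x) i)^2 ≤ ∑ j, (x j)^2) :
    ip W L ≤ nuclearNorm L := by
  have hH : (Lᵀ * L).IsHermitian := by simpa using Matrix.isHermitian_conjTranspose_mul_self L
  obtain ⟨hQ1, hQ2, hQ3⟩ := spectral_pack hH
  set Q : Matrix (Fin n) (Fin n) ℝ := (hH.eigenvectorUnitary : Matrix (Fin n) (Fin n) ℝ)
    with hQdef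
  have hLH : Lᴴ = Lᵀ := Matrix.conjTranspose_eq_transpose_of_trivial L
  have e1 : ip W L = ∑ j, ∑ i, (W*Q) i j * (L*Q) i j := by
    calc ip W L = Matrix.trace (Wᵀ * L) := ip_eq_trace _ _
      _ = Matrix.trace ((Wᵀ * L * Q) * Qᵀ) := by
          rw [Matrix.mul_assoc (Wᵀ * L) Q Qᵀ, hQ2, Matrix.mul_one]
      _ = Matrix.trace (Qᵀ * (Wᵀ * L * Q)) := Matrix.trace_mul_comm _ _
      _ = Matrix.trace ((W*Q)ᵀ * (L*Q)) := by
          rw [show (W*Q)ᵀ * (L*Q) = Qᵀ * (Wᵀ * L * Q) by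
            simp [Matrix.transpose_mul, Matrix.mul_assoc]]
      _ = ∑ j, ∑ i, (W*Q) i j * (L*Q) i j := trace_transpose_mul _ _
  have bW : ∀ j, ∑ i, ((W*Q) i j)^2 ≤ 1 := by
    intro j
    have hcol : ∀ i, (W*Q) i j = (W *ᵥ (fun k => Q k j)) i := by
      intro i; simp [Matrix.mul_apply, Matrix.mulVec, dotProduct]
    have hq : ∑ k, ((fun k => Q k j) k)^2 = 1 := by
      have h7 : (Qᵀ*Q) j j = (1 : Matrix (Fin n) (Fin n) ℝ) j j := by rw [hQ1]
      simp only [Matrix.mul_apply, Matrix.transpose_apply, Matrix.one_apply_eq] at h7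
      simpa [sq] using h7
    calc ∑ i, ((W*Q) i j)^2 = ∑ i, ((W *ᵥ (fun k => Q k j)) i)^2 := by
          simp_rw [hcol]
      _ ≤ ∑ k, ((fun k => Q k j) k)^2 := hW _
      _ = 1 := hq
  have bL : ∀ j, ∑ i, ((L*Q) i j)^2 = hH.eigenvalues j := by
    intro j
    have h5 : (L*Q)ᵀ * (L*Q) = Matrix.diagonal hH.eigenvalues := by
      rw [← hQ3]
      simp [Matrix.transpose_mul, Matrix.mul_assoc]
    have h6 : ((L*Q)ᵀ * (L*Q)) j j = hH.eigenvalues j := by rw [h5]; simp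
    rw [← h6]
    simp only [Matrix.mul_apply, Matrix.transpose_apply, sq]
  rw [e1]
  unfold nuclearNorm
  apply Finset.sum_le_sum
  intro j _
  calc ∑ i, (W*Q) i j * (L*Q) i j
      ≤ Real.sqrt (∑ i, ((W*Q) i j)^2) * Real.sqrt (∑ i, ((L*Q) i j)^2) :=
        Real.sum_mul_le_sqrt_mul_sqrt _ _ _
    _ ≤ 1 * Real.sqrt (hH.eigenvalues j) := by
        rw [bL j]
        apply mul_le_mul_of_nonneg_right _ (Real.sqrt_nonneg _)
        exact Real.sqrt_le_one.mpr (bW j)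
    _ = Real.sqrt (hH.eigenvalues j) := one_mul _

lemma conj_diag_bound {k : ℕ} (V : Matrix (Fin k) (Fin k) ℝ) (hV : Vᵀ * V = 1)
    (d : Fin k → ℝ) (hd : ∀ j, d j ≤ 1) (x : Fin k → ℝ) :
    x ⬝ᵥ ((V * Matrix.diagonal d * Vᵀ) *ᵥ x) ≤ ∑ j, (x j)^2 := by
  have hVV : V * Vᵀ = 1 := mul_eq_one_comm.mp hV
  set y := Vᵀ *ᵥ x with hy
  have h1 : (V * Matrix.diagonal d * Vᵀ) *ᵥ x = V *ᵥ (Matrix.diagonal d *ᵥ y) := by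
    rw [← Matrix.mulVec_mulVec, ← Matrix.mulVec_mulVec]
  have h2 : x ⬝ᵥ (V *ᵥ (Matrix.diagonal d *ᵥ y)) = y ⬝ᵥ (Matrix.diagonal d *ᵥ y) := by
    rw [Matrix.dotProduct_mulVec, ← Matrix.mulVec_transpose]
  have h3 : y ⬝ᵥ (Matrix.diagonal d *ᵥ y) = ∑ j, d j * (y j)^2 := by
    simp only [dotProduct, Matrix.mulVec_diagonal]
    exact Finset.sum_congr rfl fun j _ => by ring
  have h4 : ∑ j, d j * (y j)^2 ≤ ∑ j, (y j)^2 :=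
    Finset.sum_le_sum fun j _ => by nlinarith [sq_nonneg (y j), hd j]
  have h5 : ∑ j, (y j)^2 = ∑ j, (x j)^2 := by
    have := sum_sq_mulVec Vᵀ x
    rw [hy, this]
    simp only [Matrix.transpose_transpose, hVV, Matrix.one_mulVec]
    simp [dotProduct, sq]
  rw [h1, h2, h3]
  linarith

lemma exists_dual_witness {m n : ℕ} (L : Matrix (Fin m) (Fin n) ℝ) :
    ∃ W : Matrix (Fin m) (Fin n) ℝ,
      (∀ x : Fin n → ℝ, ∑ i, ((W *ᵥ x) i)^2 ≤ ∑ j, (x j)^2) ∧ ip W L = nuclearNorm L := by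
  have hH : (Lᵀ * L).IsHermitian := by simpa using Matrix.isHermitian_conjTranspose_mul_self L
  obtain ⟨hQ1, hQ2, hQ3⟩ := spectral_pack hH
  set Q : Matrix (Fin n) (Fin n) ℝ := (hH.eigenvectorUnitary : Matrix (Fin n) (Fin n) ℝ)
    with hQdef
  have hLH : Lᴴ = Lᵀ := Matrix.conjTranspose_eq_transpose_of_trivial L
  have hQ3' : Qᵀ * (Lᵀ * L) * Q = Matrix.diagonal hH.eigenvalues := by exact hQ3
  have heig : ∀ j, 0 ≤ hH.eigenvalues j := fun j =>
    Matrix.eigenvalues_conjTranspose_mul_self_nonneg L j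
  set p : Fin n → ℝ := fun j => if hH.eigenvalues j = 0 then 0 else (Real.sqrt (hH.eigenvalues j))⁻¹
    with hp
  set N : Matrix (Fin m) (Fin n) ℝ := L * Q with hN
  have key2 : Nᵀ * N = Matrix.diagonal hH.eigenvalues := by
    rw [← hQ3']
    simp [hN, Matrix.transpose_mul, Matrix.mul_assoc]
  have hle : ∀ j, p j * (hH.eigenvalues j * p j) ≤ 1 := by
    intro j
    by_cases h : hH.eigenvalues j = 0
    · simp [hp, h]
    · have hpos : 0 < hH.eigenvalues j := lt_of_le_of_ne (heig j) (Ne.symm h)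
      have hs : Real.sqrt (hH.eigenvalues j) ≠ 0 := by positivity
      have hmul : Real.sqrt (hH.eigenvalues j) * Real.sqrt (hH.eigenvalues j)
          = hH.eigenvalues j := Real.mul_self_sqrt (heig j)
      simp only [hp, if_neg h]
      rw [← hmul]
      field_simp
      rw [Real.sqrt_sq (Real.sqrt_nonneg _)]
  refine ⟨N * Matrix.diagonal p * Qᵀ, ?_, ?_⟩
  · -- operator norm ≤ 1
    intro x
    have hWtW : (N * Matrix.diagonal p * Qᵀ)ᵀ * (N * Matrix.diagonal p * Qᵀ)
        = Q * Matrix.diagonal (fun j => p j * (hH.eigenvalues j * p j)) * Qᵀ := by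
      have hdd : Matrix.diagonal p * (Matrix.diagonal hH.eigenvalues * (Matrix.diagonal p * Qᵀ))
          = Matrix.diagonal (fun j => p j * (hH.eigenvalues j * p j)) * Qᵀ := by
        rw [← Matrix.mul_assoc (Matrix.diagonal hH.eigenvalues), Matrix.diagonal_mul_diagonal,
          ← Matrix.mul_assoc, Matrix.diagonal_mul_diagonal]
      calc (N * Matrix.diagonal p * Qᵀ)ᵀ * (N * Matrix.diagonal p * Qᵀ)
          = Q * (Matrix.diagonal p * ((Nᵀ * N) * (Matrix.diagonal p * Qᵀ))) := by
            simp [Matrix.transpose_mul, Matrix.mul_assoc]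
        _ = Q * (Matrix.diagonal p * (Matrix.diagonal hH.eigenvalues * (Matrix.diagonal p * Qᵀ))) := by
            rw [key2]
        _ = Q * Matrix.diagonal (fun j => p j * (hH.eigenvalues j * p j)) * Qᵀ := by
            rw [hdd, ← Matrix.mul_assoc]
    rw [sum_sq_mulVec, hWtW]
    exact conj_diag_bound Q hQ1 _ hle x
  · -- inner product equals the nuclear norm
    have e1 : (N * Matrix.diagonal p * Qᵀ)ᵀ * L = Q * (Matrix.diagonal p * (Nᵀ * L)) := by
      simp [Matrix.transpose_mul, Matrix.mul_assoc]
    calc ip (N * Matrix.diagonal p * Qᵀ) L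
        = Matrix.trace ((N * Matrix.diagonal p * Qᵀ)ᵀ * L) := ip_eq_trace _ _
      _ = Matrix.trace ((Matrix.diagonal p * (Nᵀ * L)) * Q) := by
          rw [e1, Matrix.trace_mul_comm]
      _ = Matrix.trace (Matrix.diagonal p * (Nᵀ * N)) := by
          rw [Matrix.mul_assoc, Matrix.mul_assoc, hN]
      _ = Matrix.trace (Matrix.diagonal p * Matrix.diagonal hH.eigenvalues) := by rw [key2]
      _ = ∑ j, p j * hH.eigenvalues j := by
          rw [Matrix.diagonal_mul_diagonal, Matrix.trace_diagonal]
      _ = nuclearNorm L := by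
          unfold nuclearNorm
          refine Finset.sum_congr rfl fun j _ => ?_
          by_cases h : hH.eigenvalues j = 0
          · simp [hp, h]
          · have hs : Real.sqrt (hH.eigenvalues j) ≠ 0 := by
              have hpos : 0 < hH.eigenvalues j := lt_of_le_of_ne (heig j) (Ne.symm h)
              positivity
            have hmul : Real.sqrt (hH.eigenvalues j) * Real.sqrt (hH.eigenvalues j)
                = hH.eigenvalues j := Real.mul_self_sqrt (heig j)
            simp only [hp, if_neg h]
            rw [inv_mul_eq_div, div_eq_iff hs]
            exact hmul.symm

lemma ip_comm {m n : ℕ} (A B : Matrix (Fin m) (Fin n) ℝ) : ip A B = ip B A := by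
  unfold ip; exact Finset.sum_congr rfl fun i _ => Finset.sum_congr rfl fun j _ => mul_comm _ _

lemma ip_sub_right {m n : ℕ} (A B C : Matrix (Fin m) (Fin n) ℝ) :
    ip A (B - C) = ip A B - ip A C := by
  unfold ip
  rw [← Finset.sum_sub_distrib]
  refine Finset.sum_congr rfl fun i _ => ?_
  rw [← Finset.sum_sub_distrib]
  refine Finset.sum_congr rfl fun j _ => ?_
  simp [Matrix.sub_apply]; ring

lemma ip_smul_right {m n : ℕ} (c : ℝ) (A B : Matrix (Fin m) (Fin n) ℝ) :
    ip A (c • B) = c * ip A B := by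
  unfold ip
  rw [Finset.mul_sum]
  refine Finset.sum_congr rfl fun i _ => ?_
  rw [Finset.mul_sum]
  refine Finset.sum_congr rfl fun j _ => ?_
  simp [Matrix.smul_apply]; ring

lemma frob_expand {m n : ℕ} (A B : Matrix (Fin m) (Fin n) ℝ) :
    frobSq (A + B) = frobSq A + 2 * ip A B + frobSq B := by
  unfold frobSq ip
  rw [Finset.mul_sum, ← Finset.sum_add_distrib, ← Finset.sum_add_distrib]
  refine Finset.sum_congr rfl fun i _ => ?_
  rw [Finset.mul_sum, ← Finset.sum_add_distrib, ← Finset.sum_add_distrib]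
  refine Finset.sum_congr rfl fun j _ => ?_
  simp [Matrix.add_apply]; ring

lemma frobSq_nonneg {m n : ℕ} (A : Matrix (Fin m) (Fin n) ℝ) : 0 ≤ frobSq A := by
  unfold frobSq; positivity

lemma frobSq_eq_zero {m n : ℕ} {A : Matrix (Fin m) (Fin n) ℝ} (h : frobSq A = 0) : A = 0 := by
  unfold frobSq at h
  ext i j
  have h1 := (Finset.sum_eq_zero_iff_of_nonneg (fun i _ => by positivity)).mp h i (by simp)
  have h2 := (Finset.sum_eq_zero_iff_of_nonneg (fun j _ => by positivity)).mp h1 j (by simp)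
  have := pow_eq_zero_iff (n := 2) (by norm_num) |>.mp h2
  simpa using this

lemma ip_conj {m n : ℕ} (U : Matrix (Fin m) (Fin m) ℝ) (V : Matrix (Fin n) (Fin n) ℝ)
    (hU : Uᵀ * U = 1) (hV : Vᵀ * V = 1) (A B : Matrix (Fin m) (Fin n) ℝ) :
    ip (U * A * Vᵀ) (U * B * Vᵀ) = ip A B := by
  rw [ip_eq_trace, ip_eq_trace]
  have e1 : (U * A * Vᵀ)ᵀ * (U * B * Vᵀ) = V * (Aᵀ * (B * Vᵀ)) := by
    calc (U * A * Vᵀ)ᵀ * (U * B * Vᵀ) = V * (Aᵀ * ((Uᵀ * U) * (B * Vᵀ))) := by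
          simp [Matrix.transpose_mul, Matrix.mul_assoc]
      _ = V * (Aᵀ * (B * Vᵀ)) := by rw [hU, Matrix.one_mul]
  rw [e1, Matrix.trace_mul_comm]
  rw [show Aᵀ * (B * Vᵀ) * V = Aᵀ * B * (Vᵀ * V) by simp [Matrix.mul_assoc]]
  rw [hV, Matrix.mul_one]

lemma ip_conj_left {m n : ℕ} (U : Matrix (Fin m) (Fin m) ℝ) (V : Matrix (Fin n) (Fin n) ℝ)
    (W : Matrix (Fin m) (Fin n) ℝ) (B : Matrix (Fin m) (Fin n) ℝ) :
    ip W (U * B * Vᵀ) = ip (Uᵀ * W * V) B := by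
  rw [ip_eq_trace, ip_eq_trace]
  have e1 : (Uᵀ * W * V)ᵀ * B = Vᵀ * (Wᵀ * (U * B)) := by
    simp [Matrix.transpose_mul, Matrix.mul_assoc]
  rw [e1, Matrix.trace_mul_comm (Vᵀ) (Wᵀ * (U * B))]
  congr 1
  simp [Matrix.mul_assoc]

lemma col_sq_sum {k : ℕ} (Q : Matrix (Fin k) (Fin k) ℝ) (hQ : Qᵀ * Q = 1) (j : Fin k) :
    ∑ i, (Q i j)^2 = 1 := by
  have h7 : (Qᵀ * Q) j j = (1 : Matrix (Fin k) (Fin k) ℝ) j j := by rw [hQ]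
  simp only [Matrix.mul_apply, Matrix.transpose_apply, Matrix.one_apply_eq] at h7
  simpa [sq] using h7

lemma entry_bound {m n : ℕ} (U : Matrix (Fin m) (Fin m) ℝ) (V : Matrix (Fin n) (Fin n) ℝ)
    (hU : Uᵀ * U = 1) (hV : Vᵀ * V = 1) (W' : Matrix (Fin m) (Fin n) ℝ)
    (hW' : ∀ x : Fin n → ℝ, ∑ i, ((W' *ᵥ x) i)^2 ≤ ∑ j, (x j)^2) (i : Fin m) (j : Fin n) :
    (Uᵀ * W' * V) i j ≤ 1 := by
  set v : Fin n → ℝ := fun l => V l j with hv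
  have he : (Uᵀ * W' * V) i j = ∑ k, U k i * ((W' *ᵥ v) k) := by
    simp only [Matrix.mul_apply, Matrix.transpose_apply, Matrix.mulVec, dotProduct,
      Finset.sum_mul, Finset.mul_sum]
    rw [Finset.sum_comm]
    exact Finset.sum_congr rfl fun k _ => Finset.sum_congr rfl fun l _ => by ring
  have hcs := Finset.sum_mul_sq_le_sq_mul_sq Finset.univ (fun k => U k i) (fun k => (W' *ᵥ v) k)
  have hU1 : ∑ k, (U k i)^2 = 1 := col_sq_sum U hU i
  have hV1 : ∑ l, (v l)^2 = 1 := col_sq_sum V hV j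
  have hz : ∑ k, ((W' *ᵥ v) k)^2 ≤ 1 := by rw [← hV1]; exact hW' v
  have hsq : ((Uᵀ * W' * V) i j)^2 ≤ 1 := by
    rw [he]
    calc (∑ k, U k i * ((W' *ᵥ v) k))^2
        ≤ (∑ k, (U k i)^2) * ∑ k, ((W' *ᵥ v) k)^2 := hcs
      _ ≤ 1 := by rw [hU1, one_mul]; exact hz
  nlinarith [sq_nonneg ((Uᵀ * W' * V) i j - 1)]

lemma main_aux {m n : ℕ} (tau : ℝ) (htau : 0 < tau)
    (T : Matrix (Fin m) (Fin n) ℝ)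
    (U : Matrix (Fin m) (Fin m) ℝ) (V : Matrix (Fin n) (Fin n) ℝ)
    (S : Matrix (Fin m) (Fin n) ℝ)
    (hU : Uᵀ * U = 1) (hV : Vᵀ * V = 1)
    (hSdiag : ∀ (i : Fin m) (j : Fin n), (i : ℕ) ≠ (j : ℕ) → S i j = 0)
    (hSnonneg : ∀ i j, 0 ≤ S i j)
    (hT : T = U * S * Vᵀ) :
    (∀ L : Matrix (Fin m) (Fin n) ℝ,
        nuclearNorm (U * Matrix.of (fun i j => max (S i j - tau) 0) * Vᵀ)
          + (1 / (2 * tau)) * frobSq (U * Matrix.of (fun i j => max (S i j - tau) 0) * Vᵀ - T)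
        ≤ nuclearNorm L + (1 / (2 * tau)) * frobSq (L - T)) ∧
    (∀ L : Matrix (Fin m) (Fin n) ℝ,
        (∀ M, nuclearNorm L + (1 / (2 * tau)) * frobSq (L - T)
          ≤ nuclearNorm M + (1 / (2 * tau)) * frobSq (M - T)) →
        L = U * Matrix.of (fun i j => max (S i j - tau) 0) * Vᵀ) := by
  have htau' : tau ≠ 0 := ne_of_gt htau
  set Ssh : Matrix (Fin m) (Fin n) ℝ := Matrix.of (fun i j => max (S i j - tau) 0) with hSsh
  set C : Matrix (Fin m) (Fin n) ℝ := Matrix.of (fun i j => (S i j - Ssh i j) / tau) with hC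
  set D : Matrix (Fin m) (Fin n) ℝ := U * Ssh * Vᵀ with hD
  set W : Matrix (Fin m) (Fin n) ℝ := U * C * Vᵀ with hW
  have hSsh_app : ∀ i j, Ssh i j = max (S i j - tau) 0 := fun i j => rfl
  have hC_app : ∀ i j, C i j = (S i j - Ssh i j) / tau := fun i j => rfl
  have hSsh_nonneg : ∀ i j, 0 ≤ Ssh i j := fun i j => le_max_right _ _
  have hCd : ∀ (i : Fin m) (j : Fin n), (i : ℕ) ≠ (j : ℕ) → C i j = 0 := by
    intro i j h
    have hs := hSdiag i j h
    have h0 : Ssh i j = 0 := by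
      rw [hSsh_app, hs]
      exact max_eq_right (by linarith)
    rw [hC_app, h0, hs]
    simp
  have hC0 : ∀ i j, 0 ≤ C i j ∧ C i j ≤ 1 := by
    intro i j
    rcases le_or_gt (S i j) tau with h | h
    · have h0 : Ssh i j = 0 := by rw [hSsh_app]; exact max_eq_right (by linarith)
      rw [hC_app, h0, sub_zero]
      exact ⟨div_nonneg (hSnonneg i j) (le_of_lt htau), (div_le_one htau).mpr h⟩
    · have h0 : Ssh i j = S i j - tau := by rw [hSsh_app]; exact max_eq_left (by linarith)
      rw [hC_app, h0, show S i j - (S i j - tau) = tau by ring, div_self htau']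
      exact ⟨zero_le_one, le_rfl⟩
  have hCS : ∀ i j, C i j * Ssh i j = Ssh i j := by
    intro i j
    rcases le_or_gt (S i j) tau with h | h
    · have h0 : Ssh i j = 0 := by rw [hSsh_app]; exact max_eq_right (by linarith)
      rw [h0, mul_zero]
    · have h0 : Ssh i j = S i j - tau := by rw [hSsh_app]; exact max_eq_left (by linarith)
      have h1 : C i j = 1 := by
        rw [hC_app, h0, show S i j - (S i j - tau) = tau by ring, div_self htau']
      rw [h1, one_mul]
  have hDT : D - T = (-tau) • W := by
    rw [hT, hD]
    have h1 : Ssh - S = (-tau) • C := by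
      ext i j
      simp only [Matrix.sub_apply, Matrix.smul_apply, hC_app, smul_eq_mul]
      field_simp
      ring
    calc U * Ssh * Vᵀ - U * S * Vᵀ = U * (Ssh - S) * Vᵀ := by
          rw [Matrix.mul_sub, Matrix.sub_mul]
      _ = (-tau) • W := by
          rw [h1, hW, Matrix.mul_smul, Matrix.smul_mul]
  have hCtC : Cᵀ * C = Matrix.diagonal (fun j => ∑ i, (C i j)^2) := by
    ext j k
    by_cases h : j = k
    · subst h
      simp [Matrix.mul_apply, sq]
    · have hz : ∀ i : Fin m, C i j * C i k = 0 := by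
        intro i
        rcases eq_or_ne (i : ℕ) (j : ℕ) with hij | hij
        · have hik : (i : ℕ) ≠ (k : ℕ) := by
            intro hc
            exact h (Fin.ext (by omega))
          rw [hCd i k hik, mul_zero]
        · rw [hCd i j hij, zero_mul]
      rw [Matrix.mul_apply, Matrix.diagonal_apply_ne _ h]
      exact Finset.sum_eq_zero fun i _ => hz i
  have hdle : ∀ j : Fin n, (∑ i, (C i j)^2) ≤ 1 := by
    intro j
    by_cases h : (j : ℕ) < m
    · rw [Finset.sum_eq_single (⟨(j : ℕ), h⟩ : Fin m)]
      · nlinarith [(hC0 ⟨(j : ℕ), h⟩ j).1, (hC0 ⟨(j : ℕ), h⟩ j).2]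
      · intro i _ hne
        have : (i : ℕ) ≠ (j : ℕ) := by
          intro hc
          exact hne (Fin.ext (by simpa using hc))
        rw [hCd i j this]
        simp
      · intro habs
        exact absurd (Finset.mem_univ _) habs
    · have : ∑ i, (C i j)^2 = 0 := Finset.sum_eq_zero fun i _ => by
        rw [hCd i j (by omega)]; simp
      rw [this]
      exact zero_le_one
  have hWop : ∀ x : Fin n → ℝ, ∑ i, ((W *ᵥ x) i)^2 ≤ ∑ j, (x j)^2 := by
    intro x
    rw [sum_sq_mulVec]
    have hWtW : Wᵀ * W = V * Matrix.diagonal (fun j => ∑ i, (C i j)^2) * Vᵀ := by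
      calc Wᵀ * W = V * (Cᵀ * ((Uᵀ * U) * (C * Vᵀ))) := by
            rw [hW]
            simp [Matrix.transpose_mul, Matrix.mul_assoc]
        _ = V * ((Cᵀ * C) * Vᵀ) := by rw [hU, Matrix.one_mul]; simp [Matrix.mul_assoc]
        _ = V * Matrix.diagonal (fun j => ∑ i, (C i j)^2) * Vᵀ := by
            rw [hCtC, ← Matrix.mul_assoc]
    rw [hWtW]
    exact conj_diag_bound V hV _ hdle x
  have hipWD : ip W D = ∑ i, ∑ j, Ssh i j := by
    rw [hW, hD, ip_conj U V hU hV C Ssh]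
    unfold ip
    exact Finset.sum_congr rfl fun i _ => Finset.sum_congr rfl fun j _ => hCS i j
  have hnucD : nuclearNorm D = ip W D := by
    refine le_antisymm ?_ (ip_le_nuclearNorm W D hWop)
    obtain ⟨W', hW'op, hW'⟩ := exists_dual_witness D
    rw [← hW']
    calc ip W' D = ip (Uᵀ * W' * V) Ssh := by rw [hD]; exact ip_conj_left U V W' Ssh
      _ ≤ ∑ i, ∑ j, Ssh i j := by
          unfold ip
          refine Finset.sum_le_sum fun i _ => Finset.sum_le_sum fun j _ => ?_
          nlinarith [entry_bound U V hU hV W' hW'op i j, hSsh_nonneg i j]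
      _ = ip W D := hipWD.symm
  have key : ∀ L, (nuclearNorm L + (1 / (2 * tau)) * frobSq (L - T))
      - (nuclearNorm D + (1 / (2 * tau)) * frobSq (D - T))
      = (nuclearNorm L - ip W L) + (1 / (2 * tau)) * frobSq (L - D) := by
    intro L
    have e1 : frobSq (L - T) = frobSq (L - D) + 2 * ip (L - D) (D - T) + frobSq (D - T) := by
      rw [show L - T = (L - D) + (D - T) from (sub_add_sub_cancel L D T).symm, frob_expand]
    have e2 : ip (L - D) (D - T) = -tau * (ip W L - ip W D) := by
      rw [hDT, ip_smul_right, ip_comm, ip_sub_right]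
    rw [e1, e2, hnucD]
    generalize nuclearNorm L = a
    generalize frobSq (L - D) = b
    generalize frobSq (D - T) = c
    generalize ip W L = w
    generalize ip W D = d
    field_simp
    ring
  constructor
  · intro L
    have hk := key L
    have h1 := ip_le_nuclearNorm W L hWop
    have h2 := frobSq_nonneg (L - D)
    have h3 : 0 < 1 / (2 * tau) := by positivity
    linarith [mul_nonneg h3.le h2]
  · intro L hL
    have hk := key L
    have h1 := ip_le_nuclearNorm W L hWop
    have h2 := frobSq_nonneg (L - D)
    have h3 : 0 < 1 / (2 * tau) := by positivity
    have h4 := hL D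
    have hcb : (1 / (2 * tau)) * frobSq (L - D) ≤ 0 := by linarith
    have hcb' : 0 ≤ (1 / (2 * tau)) * frobSq (L - D) := mul_nonneg h3.le h2
    have h5 : frobSq (L - D) = 0 := by
      rcases mul_eq_zero.mp (le_antisymm hcb hcb') with h | h
      · exact absurd h h3.ne'
      · exact h
    have h6 := frobSq_eq_zero h5
    have : L - D = 0 := h6
    exact sub_eq_zero.mp this

end SVTaux

theorem singular_value_thresholding_solves_nuclear_prox {m n : ℕ} (tau : ℝ) (htau : 0 < tau)
    (T : Matrix (Fin m) (Fin n) ℝ)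
    (U : Matrix (Fin m) (Fin m) ℝ) (V : Matrix (Fin n) (Fin n) ℝ)
    (S : Matrix (Fin m) (Fin n) ℝ)
    (hU : Uᵀ * U = 1) (hV : Vᵀ * V = 1)
    (hSdiag : ∀ (i : Fin m) (j : Fin n), (i : ℕ) ≠ (j : ℕ) → S i j = 0)
    (hSnonneg : ∀ i j, 0 ≤ S i j)
    (hT : T = U * S * Vᵀ) :
    let Sshrunk : Matrix (Fin m) (Fin n) ℝ := Matrix.of fun i j => max (S i j - tau) 0
    let D : Matrix (Fin m) (Fin n) ℝ := U * Sshrunk * Vᵀ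
    let g : Matrix (Fin m) (Fin n) ℝ → ℝ := fun L =>
      nuclearNorm L + (1 / (2 * tau)) * frobSq (L - T)
    (∀ L, g D ≤ g L) ∧ (∀ L, (∀ M, g L ≤ g M) → L = D) := by
  intro Sshrunk D g
  obtain ⟨h1, h2⟩ := SVTaux.main_aux tau htau T U V S hU hV hSdiag hSnonneg hT
  exact ⟨h1, h2⟩
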